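/- For every α > 0 and n ≥ 1, the function p(x,y) = |x − y|/√(|x − y|² + α(1 − |x|)(1 − |y|)) on the open unit ball 𝔹ⁿ is not a metric: with k = α/(4 + α), the points x = k·e₁, y = −k·e₁, z = 0 satisfy p(x,y) > p(x,z) + p(z,y). -/

import Mathlib

theorem ppf_alpha_ball_not_metric (n : ℕ) (hn : 1 ≤ n) (α : ℝ) (hα : 0 < α)
    (p : EuclideanSpace ℝ (Fin n) → EuclideanSpace ℝ (Fin n) → ℝ)
    (hp : ∀ x y, p x y = ‖x - y‖ /
      Real.sqrt (‖x - y‖^2 + α * (1 - ‖x‖) * (1 - ‖y‖))) :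
    ∀ e₁ : EuclideanSpace ℝ (Fin n), e₁ = EuclideanSpace.single ⟨0, by omega⟩ (1 : ℝ) →
      p ((α/(4+α)) • e₁) (-(α/(4+α)) • e₁) >
        p ((α/(4+α)) • e₁) 0 + p 0 (-(α/(4+α)) • e₁) := by
  intro e₁ he
  have hne : ‖e₁‖ = 1 := by
    rw [he, EuclideanSpace.norm_single, norm_one]
  set k : ℝ := α / (4 + α) with hkdef
  have h4α : (0:ℝ) < 4 + α := by linarith
  have hk0 : 0 < k := div_pos hα h4α
  have hkeq : k * (4 + α) = α := div_mul_cancel₀ α (ne_of_gt h4α)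
  have hk1 : k < 1 := by nlinarith
  have hxy : (k • e₁) - (-k • e₁) = (2 * k) • e₁ := by
    rw [neg_smul, sub_neg_eq_add, ← two_smul ℝ, smul_smul]
  have hnxy : ‖(k • e₁) - (-k • e₁)‖ = 2 * k := by
    rw [hxy, norm_smul, hne, mul_one, Real.norm_eq_abs, abs_of_pos (by linarith)]
  have hnk : ‖k • e₁‖ = k := by
    rw [norm_smul, hne, mul_one, Real.norm_eq_abs, abs_of_pos hk0]
  have hnnk : ‖(-k : ℝ) • e₁‖ = k := by
    rw [norm_smul, hne, mul_one, Real.norm_eq_abs, abs_neg, abs_of_pos hk0]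
  have hx0 : ‖(k • e₁) - 0‖ = k := by rw [sub_zero, hnk]
  have h0y : ‖(0 : EuclideanSpace ℝ (Fin n)) - (-k • e₁)‖ = k := by
    rw [zero_sub, norm_neg, hnnk]
  rw [hp, hp, hp, hnxy, hnk, hnnk, hx0, h0y, norm_zero]
  have hA : (0:ℝ) < (2*k)^2 + α * (1 - k) * (1 - k) := by nlinarith
  have hB : (0:ℝ) < k^2 + α * (1 - k) * (1 - 0) := by nlinarith
  have hAB : (2*k)^2 + α * (1 - k) * (1 - k) < k^2 + α * (1 - k) * (1 - 0) := by
    nlinarith [sq_nonneg k, hkeq]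
  have hsA : 0 < Real.sqrt ((2*k)^2 + α * (1 - k) * (1 - k)) := Real.sqrt_pos.mpr hA
  have hsAB : Real.sqrt ((2*k)^2 + α * (1 - k) * (1 - k)) <
      Real.sqrt (k^2 + α * (1 - k) * (1 - 0)) :=
    Real.sqrt_lt_sqrt (le_of_lt hA) hAB
  have h0y2 : k^2 + α * (1 - 0) * (1 - k) = k^2 + α * (1 - k) * (1 - 0) := by ring
  rw [h0y2]
  have key : 2 * k / Real.sqrt (k^2 + α * (1 - k) * (1 - 0)) <
      2 * k / Real.sqrt ((2*k)^2 + α * (1 - k) * (1 - k)) :=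
    div_lt_div_of_pos_left (by linarith) hsA hsAB
  rw [← add_div, show k + k = 2 * k from by ring]
  exact key
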